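/- If p is a prime such that 2p + 1 = 3^q for some positive integer q, then 1/p belongs to the middle-third Cantor set. -/

import Mathlib

def cantorSet3 : Set ℝ :=
  {x | ∃ a : ℕ → ℕ, (∀ k, a k = 0 ∨ a k = 2) ∧ x = ∑' k : ℕ, (a k : ℝ) / 3 ^ (k + 1)}

theorem stmt_2 (p q : ℕ) (hp : p.Prime) (hq : 0 < q)
    (h : 2 * p + 1 = 3 ^ q) : (1 / (p : ℝ)) ∈ cantorSet3 := by
  set a : ℕ → ℕ := fun k => if q ∣ (k + 1) then 2 else 0 with ha
  refine ⟨a, fun k => by by_cases hk : q ∣ (k + 1) <;> simp [ha, hk], ?_⟩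
  set r : ℝ := (1 / 3) ^ q with hr
  have hr0 : 0 < r := by positivity
  have hr1 : r < 1 := by
    apply pow_lt_one₀ (by norm_num) (by norm_num)
    omega
  have key : (∑' k : ℕ, (a k : ℝ) / 3 ^ (k + 1)) = ∑' n : ℕ, 2 * r ^ (n + 1) := by
    refine tsum_eq_tsum_of_ne_zero_bij (fun n => q * (n.1 + 1) - 1) ?_ ?_ ?_
    · intro x y hxy
      simp only at hxy
      have hx : 1 ≤ q * (x.1 + 1) := Nat.one_le_iff_ne_zero.mpr (by positivity)
      have hy : 1 ≤ q * (y.1 + 1) := Nat.one_le_iff_ne_zero.mpr (by positivity)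
      have hxy' : q * (x.1 + 1) = q * (y.1 + 1) := by omega
      have := Nat.eq_of_mul_eq_mul_left hq hxy'
      exact Subtype.ext (by omega)
    · intro k hk
      simp only [Function.mem_support, ha] at hk
      by_cases hd : q ∣ (k + 1)
      · obtain ⟨m, hm⟩ := hd
        have hm1 : 1 ≤ m := by
          rcases Nat.eq_zero_or_pos m with h0 | h1
          · simp [h0] at hm
          · exact h1
        refine ⟨⟨m - 1, ?_⟩, ?_⟩
        · simp only [Function.mem_support]
          positivity
        · simp only
          have : m - 1 + 1 = m := by omega
          rw [this]
          omega
      · simp [hd] at hk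
    · rintro ⟨n, hn⟩
      have hpos : 1 ≤ q * (n + 1) := Nat.one_le_iff_ne_zero.mpr (by positivity)
      have hk1 : q * (n + 1) - 1 + 1 = q * (n + 1) := by omega
      have hd2 : q ∣ q * (n + 1) := ⟨n + 1, rfl⟩
      simp only [ha, hk1, hd2, if_pos, hr]
      have hpw : (((1 : ℝ) / 3) ^ q) ^ (n + 1) = 1 / 3 ^ (q * (n + 1)) := by
        rw [← pow_mul, div_pow, one_pow]
      rw [hpw]
      push_cast
      ring
  rw [key]
  have hsum : (∑' n : ℕ, 2 * r ^ (n + 1)) = 2 * (r / (1 - r)) := by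
    rw [tsum_mul_left]
    congr 1
    have hg := tsum_geometric_of_lt_one hr0.le hr1
    calc ∑' n : ℕ, r ^ (n + 1) = r * ∑' n : ℕ, r ^ n := by
          rw [tsum_mul_left.symm]; exact tsum_congr fun n => by ring
      _ = r / (1 - r) := by rw [hg]; field_simp
  rw [hsum]
  have hp0 : (0 : ℝ) < p := by exact_mod_cast hp.pos
  have h3 : ((3 : ℝ) ^ q) = 2 * p + 1 := by exact_mod_cast h.symm
  rw [hr, div_pow, one_pow, h3]
  have hne : (2 * (p : ℝ) + 1) ≠ 0 := by positivity
  field_simp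
  ring
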